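/- A population p obeying the master equation at all internal states (i.e., ∑_j H_{ij} p_j = 0 for all i ∈ N − T) holds if and only if p minimizes the extended dissipation functional C subject to the constraint p|_T = b, where b = p|_T; equivalently, ∂C/∂p_i = 0 at all internal states i. -/

import Mathlib

open Finset

namespace SteadyAux

variable {N E : Type} [Fintype N] [Fintype E] [DecidableEq N]

noncomputable def B (s t : E → N) (r : E → ℝ) (q : N → ℝ) (p v : N → ℝ) : ℝ :=
  (1/2) * ∑ e, r e * q (s e) * (p (s e) / q (s e) - p (t e) / q (t e))
    * (v (s e) / q (s e) - v (t e) / q (t e))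

noncomputable def D (s t : E → N) (r : E → ℝ) (q : N → ℝ) (p : N → ℝ) (i : N) : ℝ :=
  ∑ e ∈ Finset.univ.filter (fun e => s e = i), r e * (p i / q i - p (t e) / q (t e))

lemma sum_transfer (s t : E → N) (r : E → ℝ) (q : N → ℝ)
    (h_db : ∀ i j : N,
      ∑ e ∈ univ.filter (fun e => s e = i ∧ t e = j), r e * q i
        = ∑ e ∈ univ.filter (fun e => s e = j ∧ t e = i), r e * q j)
    (f : N → ℝ) (i : N) :
    ∑ e ∈ univ.filter (fun e => t e = i), r e * q (s e) * f (s e)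
      = ∑ e ∈ univ.filter (fun e => s e = i), r e * q i * f (t e) := by
  have hL : ∑ e ∈ univ.filter (fun e => t e = i), r e * q (s e) * f (s e)
      = ∑ j, (∑ e ∈ univ.filter (fun e => s e = j ∧ t e = i), r e * q j) * f j := by
    rw [← Finset.sum_fiberwise (univ.filter (fun e => t e = i)) s
        (fun e => r e * q (s e) * f (s e))]
    refine Finset.sum_congr rfl fun j _ => ?_
    rw [Finset.sum_mul, Finset.filter_filter]
    refine Finset.sum_congr (by ext e; simp; try tauto) fun e he => ?_
    simp only [Finset.mem_filter] at he
    rw [he.2.1]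
  have hR : ∑ e ∈ univ.filter (fun e => s e = i), r e * q i * f (t e)
      = ∑ j, (∑ e ∈ univ.filter (fun e => s e = i ∧ t e = j), r e * q i) * f j := by
    rw [← Finset.sum_fiberwise (univ.filter (fun e => s e = i)) t
        (fun e => r e * q i * f (t e))]
    refine Finset.sum_congr rfl fun j _ => ?_
    rw [Finset.sum_mul, Finset.filter_filter]
    refine Finset.sum_congr (by ext e; simp; try tauto) fun e he => ?_
    simp only [Finset.mem_filter] at he
    rw [he.2.2]
  rw [hL, hR]
  exact Finset.sum_congr rfl fun j _ => by rw [h_db i j]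

lemma S1 (s t : E → N) (r : E → ℝ) (q : N → ℝ) (p : N → ℝ) (i : N) :
    ∑ e ∈ univ.filter (fun e => s e = i),
        r e * q (s e) * (p (s e) / q (s e) - p (t e) / q (t e))
      = q i * D s t r q p i := by
  rw [D, Finset.mul_sum]
  refine Finset.sum_congr rfl fun e he => ?_
  simp only [Finset.mem_filter] at he
  rw [he.2]; ring

lemma S2 (s t : E → N) (r : E → ℝ) (q : N → ℝ)
    (h_db : ∀ i j : N,
      ∑ e ∈ univ.filter (fun e => s e = i ∧ t e = j), r e * q i
        = ∑ e ∈ univ.filter (fun e => s e = j ∧ t e = i), r e * q j)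
    (p : N → ℝ) (i : N) :
    ∑ e ∈ univ.filter (fun e => t e = i),
        r e * q (s e) * (p (s e) / q (s e) - p (t e) / q (t e))
      = -(q i * D s t r q p i) := by
  have h1 : ∑ e ∈ univ.filter (fun e => t e = i),
        r e * q (s e) * (p (s e) / q (s e) - p (t e) / q (t e))
      = ∑ e ∈ univ.filter (fun e => t e = i),
        r e * q (s e) * ((fun j => p j / q j - p i / q i) (s e)) := by
    refine Finset.sum_congr rfl fun e he => ?_
    simp only [Finset.mem_filter] at he
    rw [he.2]
  rw [h1, sum_transfer s t r q h_db (fun j => p j / q j - p i / q i) i, D, Finset.mul_sum,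
    ← Finset.sum_neg_distrib]
  refine Finset.sum_congr rfl fun e he => ?_
  ring

lemma B_single (s t : E → N) (r : E → ℝ) (q : N → ℝ) (hq : ∀ i, 0 < q i)
    (h_db : ∀ i j : N,
      ∑ e ∈ univ.filter (fun e => s e = i ∧ t e = j), r e * q i
        = ∑ e ∈ univ.filter (fun e => s e = j ∧ t e = i), r e * q j)
    (p : N → ℝ) (i : N) :
    B s t r q p (Pi.single i 1) = D s t r q p i := by
  have key : ∀ e, r e * q (s e) * (p (s e) / q (s e) - p (t e) / q (t e))
        * ((Pi.single i 1 : N → ℝ) (s e) / q (s e) - (Pi.single i 1 : N → ℝ) (t e) / q (t e))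
      = (if s e = i then r e * q (s e) * (p (s e) / q (s e) - p (t e) / q (t e)) / q i else 0)
        - (if t e = i then r e * q (s e) * (p (s e) / q (s e) - p (t e) / q (t e)) / q i else 0) := by
    intro e
    by_cases h1 : s e = i <;> by_cases h2 : t e = i <;>
      simp [Pi.single_apply, h1, h2] <;> ring
  rw [B]
  rw [Finset.sum_congr rfl fun e _ => key e, Finset.sum_sub_distrib,
    ← Finset.sum_filter, ← Finset.sum_filter, ← Finset.sum_div, ← Finset.sum_div,
    S1 s t r q p i, S2 s t r q h_db p i]
  field_simp [(hq i).ne']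
  ring

lemma master_eq_D (s t : E → N) (r : E → ℝ) (q : N → ℝ) (hq : ∀ i, 0 < q i)
    (h_db : ∀ i j : N,
      ∑ e ∈ univ.filter (fun e => s e = i ∧ t e = j), r e * q i
        = ∑ e ∈ univ.filter (fun e => s e = j ∧ t e = i), r e * q j)
    (H : Matrix N N ℝ)
    (hH_off : ∀ i j, i ≠ j → H i j = ∑ e ∈ univ.filter (fun e => s e = j ∧ t e = i), r e)
    (hH_diag : ∀ i, H i i = -∑ e ∈ univ.filter (fun e => s e = i ∧ t e ≠ i), r e)
    (p : N → ℝ) (i : N) :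
    ∑ j, H i j * p j = -(q i * D s t r q p i) := by
  -- RHS rewrite
  have hD : -(q i * D s t r q p i)
      = ∑ e ∈ univ.filter (fun e => s e = i), r e * q i * (p (t e) / q (t e))
        - ∑ e ∈ univ.filter (fun e => s e = i), r e * p i := by
    rw [D, Finset.mul_sum, ← Finset.sum_sub_distrib, ← Finset.sum_neg_distrib]
    refine Finset.sum_congr rfl fun e he => ?_
    simp only [Finset.mem_filter] at he
    field_simp [(hq i).ne']
    ring
  have htrans : ∑ e ∈ univ.filter (fun e => s e = i), r e * q i * (p (t e) / q (t e))
      = ∑ e ∈ univ.filter (fun e => t e = i), r e * p (s e) := by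
    rw [← sum_transfer s t r q h_db (fun j => p j / q j) i]
    refine Finset.sum_congr rfl fun e _ => ?_
    field_simp [(hq (s e)).ne']
  -- fiberwise on A := ∑_{t=i} r e * p (s e)
  have hA : ∑ e ∈ univ.filter (fun e => t e = i), r e * p (s e)
      = ∑ j, (∑ e ∈ univ.filter (fun e => s e = j ∧ t e = i), r e) * p j := by
    rw [← Finset.sum_fiberwise (univ.filter (fun e => t e = i)) s (fun e => r e * p (s e))]
    refine Finset.sum_congr rfl fun j _ => ?_
    rw [Finset.sum_mul, Finset.filter_filter]
    refine Finset.sum_congr (by ext e; simp; try tauto) fun e he => ?_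
    simp only [Finset.mem_filter] at he
    rw [he.2.1]
  -- split s-filter into t ≠ i and t = i parts
  have hsplit : ∑ e ∈ univ.filter (fun e => s e = i), r e * p i
      = (∑ e ∈ univ.filter (fun e => s e = i ∧ t e ≠ i), r e) * p i
        + (∑ e ∈ univ.filter (fun e => s e = i ∧ t e = i), r e) * p i := by
    have h := Finset.sum_filter_add_sum_filter_not (univ.filter (fun e => s e = i))
      (fun e => t e ≠ i) (fun e => r e * p i)
    rw [Finset.filter_filter, Finset.filter_filter] at h
    simp only [not_not] at h
    rw [Finset.sum_mul, Finset.sum_mul, ← h]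
  -- LHS: split at j = i
  have hLHS : ∑ j, H i j * p j
      = H i i * p i + ∑ j ∈ univ.erase i, H i j * p j := by
    rw [← Finset.add_sum_erase _ _ (Finset.mem_univ i)]
  have hRHSsum : ∑ j, (∑ e ∈ univ.filter (fun e => s e = j ∧ t e = i), r e) * p j
      = (∑ e ∈ univ.filter (fun e => s e = i ∧ t e = i), r e) * p i
        + ∑ j ∈ univ.erase i, H i j * p j := by
    rw [← Finset.add_sum_erase _ _ (Finset.mem_univ i)]
    congr 1
    refine Finset.sum_congr rfl fun j hj => ?_
    rw [hH_off i j (Ne.symm (Finset.ne_of_mem_erase hj))]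
  rw [hD, htrans, hA, hsplit, hRHSsum, hLHS, hH_diag i]
  ring

lemma B_decomp (s t : E → N) (r : E → ℝ) (q : N → ℝ) (p v : N → ℝ) :
    B s t r q p v = ∑ i, v i * B s t r q p (Pi.single i 1) := by
  have key : ∀ e, r e * q (s e) * (p (s e) / q (s e) - p (t e) / q (t e))
        * (v (s e) / q (s e) - v (t e) / q (t e))
      = ∑ i, v i * (r e * q (s e) * (p (s e) / q (s e) - p (t e) / q (t e))
          * ((Pi.single i 1 : N → ℝ) (s e) / q (s e) - (Pi.single i 1 : N → ℝ) (t e) / q (t e))) := by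
    intro e
    have h : ∀ i, v i * (r e * q (s e) * (p (s e) / q (s e) - p (t e) / q (t e))
          * ((Pi.single i 1 : N → ℝ) (s e) / q (s e) - (Pi.single i 1 : N → ℝ) (t e) / q (t e)))
        = (if s e = i then v i * (r e * q (s e) * (p (s e) / q (s e) - p (t e) / q (t e))) / q (s e) else 0)
          - (if t e = i then v i * (r e * q (s e) * (p (s e) / q (s e) - p (t e) / q (t e))) / q (t e) else 0) := by
      intro i
      by_cases h1 : s e = i <;> by_cases h2 : t e = i <;>
        simp [Pi.single_apply, h1, h2] <;> ring
    rw [Finset.sum_congr rfl fun i _ => h i, Finset.sum_sub_distrib,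
      Finset.sum_ite_eq, Finset.sum_ite_eq]
    simp only [Finset.mem_univ, if_true]
    ring
  rw [B]
  rw [Finset.sum_congr rfl fun e _ => key e]
  rw [Finset.sum_comm]
  rw [Finset.mul_sum]
  refine Finset.sum_congr rfl fun i _ => ?_
  simp only [B, Finset.mul_sum]
  refine Finset.sum_congr rfl fun e _ => ?_
  ring

lemma C_expand (s t : E → N) (r : E → ℝ) (q : N → ℝ) (p v : N → ℝ) :
    (1/4) * ∑ e, r e * q (s e) * ((p + v) (s e) / q (s e) - (p + v) (t e) / q (t e))^2
      = (1/4) * (∑ e, r e * q (s e) * (p (s e) / q (s e) - p (t e) / q (t e))^2)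
        + B s t r q p v
        + (1/4) * ∑ e, r e * q (s e) * (v (s e) / q (s e) - v (t e) / q (t e))^2 := by
  rw [B]
  simp only [Finset.mul_sum, ← Finset.sum_add_distrib, Pi.add_apply]
  refine Finset.sum_congr rfl fun e _ => ?_
  ring

lemma C_nonneg (s t : E → N) (r : E → ℝ) (hr : ∀ e, 0 < r e)
    (q : N → ℝ) (hq : ∀ i, 0 < q i) (v : N → ℝ) :
    0 ≤ (1/4) * ∑ e, r e * q (s e) * (v (s e) / q (s e) - v (t e) / q (t e))^2 := by
  have : (0:ℝ) ≤ ∑ e, r e * q (s e) * (v (s e) / q (s e) - v (t e) / q (t e))^2 :=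
    Finset.sum_nonneg fun e _ =>
      mul_nonneg (mul_nonneg (hr e).le (hq (s e)).le) (sq_nonneg _)
  linarith

lemma B_smul (s t : E → N) (r : E → ℝ) (q : N → ℝ) (p v : N → ℝ) (c : ℝ) :
    B s t r q p (c • v) = c * B s t r q p v := by
  simp only [B, Pi.smul_apply, smul_eq_mul, Finset.mul_sum]
  exact Finset.sum_congr rfl fun e _ => by ring

lemma C_smul (s t : E → N) (r : E → ℝ) (q : N → ℝ) (v : N → ℝ) (c : ℝ) :
    (1/4) * ∑ e, r e * q (s e) * ((c • v) (s e) / q (s e) - (c • v) (t e) / q (t e))^2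
      = c^2 * ((1/4) * ∑ e, r e * q (s e) * (v (s e) / q (s e) - v (t e) / q (t e))^2) := by
  simp only [Pi.smul_apply, smul_eq_mul, Finset.mul_sum]
  exact Finset.sum_congr rfl fun e _ => by ring

noncomputable def A (s t : E → N) (q : N → ℝ) (e : E) : (N → ℝ) →L[ℝ] ℝ :=
  (q (s e))⁻¹ • ContinuousLinearMap.proj (s e) - (q (t e))⁻¹ • ContinuousLinearMap.proj (t e)

lemma hasFDeriv (s t : E → N) (r : E → ℝ) (q : N → ℝ) (p : N → ℝ) :
    HasFDerivAt
      (fun p : N → ℝ => (1/4) * ∑ e, r e * q (s e) * (p (s e) / q (s e) - p (t e) / q (t e))^2)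
      ((1/4 : ℝ) • ∑ e, (r e * q (s e)) •
        ((2 * (p (s e) / q (s e) - p (t e) / q (t e))) • A s t q e)) p := by
  have hA : ∀ e : E, HasFDerivAt (fun p : N → ℝ => p (s e) / q (s e) - p (t e) / q (t e))
      (A s t q e) p := by
    intro e
    have hfun : ⇑(A s t q e) = fun p : N → ℝ => p (s e) / q (s e) - p (t e) / q (t e) := by
      funext v
      simp [A, div_eq_inv_mul]
    have h := (A s t q e).hasFDerivAt (x := p)
    rwa [hfun] at h
  have hterm : ∀ e : E, HasFDerivAt
      (fun p : N → ℝ => r e * q (s e) * (p (s e) / q (s e) - p (t e) / q (t e))^2)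
      ((r e * q (s e)) • ((2 * (p (s e) / q (s e) - p (t e) / q (t e))) • A s t q e)) p := by
    intro e
    have h2 : HasFDerivAt (fun p : N → ℝ => (p (s e) / q (s e) - p (t e) / q (t e))^2)
        ((2 * (p (s e) / q (s e) - p (t e) / q (t e))) • A s t q e) p := by
      have h : HasFDerivAt (fun p : N → ℝ => (p (s e) / q (s e) - p (t e) / q (t e))
            * (p (s e) / q (s e) - p (t e) / q (t e))) _ p := (hA e).mul (hA e)
      have hf : (fun p : N → ℝ => (p (s e) / q (s e) - p (t e) / q (t e))
            * (p (s e) / q (s e) - p (t e) / q (t e)))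
          = fun p : N → ℝ => (p (s e) / q (s e) - p (t e) / q (t e))^2 := by
        funext v; ring
      rw [hf] at h
      refine h.congr_fderiv ?_
      rw [two_mul, add_smul]
    exact h2.const_mul _
  have hsum := HasFDerivAt.fun_sum (fun e (_ : e ∈ Finset.univ) => hterm e)
  exact hsum.const_mul (1/4)

lemma fderiv_single (s t : E → N) (r : E → ℝ) (q : N → ℝ) (p : N → ℝ) (i : N) :
    fderiv ℝ
      (fun p : N → ℝ => (1/4) * ∑ e, r e * q (s e) * (p (s e) / q (s e) - p (t e) / q (t e))^2)
      p (Pi.single i 1)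
      = B s t r q p (Pi.single i 1) := by
  rw [(hasFDeriv s t r q p).fderiv]
  simp only [ContinuousLinearMap.coe_smul', Pi.smul_apply, ContinuousLinearMap.sum_apply,
    ContinuousLinearMap.smul_apply, A, ContinuousLinearMap.sub_apply,
    ContinuousLinearMap.proj_apply, smul_eq_mul, B]
  rw [Finset.mul_sum, Finset.mul_sum]
  refine Finset.sum_congr rfl fun e _ => ?_
  ring

end SteadyAux

open SteadyAux

/-- A population p obeys the master equation at all internal states iff it
minimizes the extended dissipation functional C subject to the constraint
that p agrees with itself on the terminals; equivalently, iff ∂C/∂p_i = 0 at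
all internal states i. -/
theorem steady_state_iff_minimum_dissipation
    {N E : Type} [Fintype N] [Fintype E] [DecidableEq N]
    (s t : E → N) (r : E → ℝ) (hr : ∀ e, 0 < r e)
    (q : N → ℝ) (hq : ∀ i, 0 < q i)
    (h_db : ∀ i j : N,
      ∑ e ∈ univ.filter (fun e => s e = i ∧ t e = j), r e * q i
        = ∑ e ∈ univ.filter (fun e => s e = j ∧ t e = i), r e * q j)
    (H : Matrix N N ℝ)
    (hH_off : ∀ i j, i ≠ j → H i j = ∑ e ∈ univ.filter (fun e => s e = j ∧ t e = i), r e)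
    (hH_diag : ∀ i, H i i = -∑ e ∈ univ.filter (fun e => s e = i ∧ t e ≠ i), r e)
    (C : (N → ℝ) → ℝ)
    (hC : ∀ p : N → ℝ,
      C p = (1/4) * ∑ e, r e * q (s e) * (p (s e) / q (s e) - p (t e) / q (t e))^2)
    (T : Set N) (p : N → ℝ) :
    ((∀ i ∉ T, ∑ j, H i j * p j = 0) ↔
        (∀ p' : N → ℝ, (∀ i ∈ T, p' i = p i) → C p ≤ C p'))
    ∧ ((∀ i ∉ T, ∑ j, H i j * p j = 0) ↔
        (∀ i ∉ T, fderiv ℝ C p (Pi.single i 1) = 0)) := by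
  have hq' : ∀ i, q i ≠ 0 := fun i => (hq i).ne'
  have hCfun : C = fun p : N → ℝ =>
      (1/4) * ∑ e, r e * q (s e) * (p (s e) / q (s e) - p (t e) / q (t e))^2 := funext hC
  subst hCfun
  simp only []
  have hmaster : ∀ i, ∑ j, H i j * p j = -(q i * D s t r q p i) :=
    fun i => master_eq_D s t r q hq h_db H hH_off hH_diag p i
  have hiff : (∀ i ∉ T, ∑ j, H i j * p j = 0) ↔ (∀ i ∉ T, D s t r q p i = 0) := by
    constructor
    · intro h i hi
      have h0 := h i hi
      rw [hmaster i] at h0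
      rcases mul_eq_zero.mp (neg_eq_zero.mp h0) with h1 | h1
      · exact absurd h1 (hq' i)
      · exact h1
    · intro h i hi
      rw [hmaster i, h i hi, mul_zero, neg_zero]
  have hfd : ∀ i : N,
      fderiv ℝ (fun p : N → ℝ =>
        (1/4) * ∑ e, r e * q (s e) * (p (s e) / q (s e) - p (t e) / q (t e))^2) p (Pi.single i 1)
      = D s t r q p i := by
    intro i
    rw [fderiv_single s t r q p i, B_single s t r q hq h_db]
  have fwd : (∀ i ∉ T, D s t r q p i = 0) →
      ∀ p' : N → ℝ, (∀ i ∈ T, p' i = p i) →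
        (1/4) * (∑ e, r e * q (s e) * (p (s e) / q (s e) - p (t e) / q (t e))^2)
          ≤ (1/4) * ∑ e, r e * q (s e) * (p' (s e) / q (s e) - p' (t e) / q (t e))^2 := by
    intro hD p' hp'
    have hpv : p' = p + (p' - p) := by
      funext j; simp
    rw [hpv, C_expand s t r q p (p' - p)]
    have hB : B s t r q p (p' - p) = 0 := by
      rw [B_decomp]
      refine Finset.sum_eq_zero fun i _ => ?_
      by_cases hi : i ∈ T
      · have h0 : (p' - p) i = 0 := by simp [hp' i hi]
        rw [h0, zero_mul]
      · rw [B_single s t r q hq h_db, hD i hi, mul_zero]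
    have hCn := C_nonneg s t r hr q hq (p' - p)
    rw [hB]
    linarith
  have bwd : (∀ p' : N → ℝ, (∀ i ∈ T, p' i = p i) →
        (1/4) * (∑ e, r e * q (s e) * (p (s e) / q (s e) - p (t e) / q (t e))^2)
          ≤ (1/4) * ∑ e, r e * q (s e) * (p' (s e) / q (s e) - p' (t e) / q (t e))^2) →
      ∀ i ∉ T, D s t r q p i = 0 := by
    intro h i hi
    set d := D s t r q p i with hd
    set a := (1/4) * ∑ e, r e * q (s e) *
        ((Pi.single i 1 : N → ℝ) (s e) / q (s e) - (Pi.single i 1 : N → ℝ) (t e) / q (t e))^2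
      with ha
    have hann : 0 ≤ a := C_nonneg s t r hr q hq (Pi.single i 1)
    have key : ∀ ε : ℝ, 0 ≤ ε * d + ε^2 * a := by
      intro ε
      have hp' : ∀ j ∈ T, (p + ε • (Pi.single i 1 : N → ℝ)) j = p j := by
        intro j hj
        have hne : j ≠ i := fun hji => hi (hji ▸ hj)
        simp [Pi.single_apply, hne]
      have hle := h (p + ε • (Pi.single i 1 : N → ℝ)) hp'
      rw [C_expand s t r q p (ε • (Pi.single i 1 : N → ℝ)), B_smul, C_smul,
        B_single s t r q hq h_db] at hle
      rw [← hd, ← ha] at hle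
      linarith
    have hc : (0:ℝ) < a + 1 := by linarith
    have h1 := key (-(d / (a + 1)))
    have h2 : (-(d / (a + 1))) * d + (-(d / (a + 1)))^2 * a = -(d^2 * (a + 1)) / (a + 1)^2
        + d^2 * a / (a + 1)^2 := by
      field_simp
    rw [h2] at h1
    have h3 : d^2 ≤ 0 := by
      have hsq : (0:ℝ) < (a + 1)^2 := by positivity
      rw [← add_div, le_div_iff₀ hsq] at h1
      nlinarith
    have h4 : d^2 = 0 := le_antisymm h3 (sq_nonneg d)
    exact pow_eq_zero_iff two_ne_zero |>.mp h4
  constructor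
  · rw [hiff]
    exact ⟨fwd, bwd⟩
  · rw [hiff]
    constructor
    · intro h i hi
      rw [hfd i, h i hi]
    · intro h i hi
      have h0 := h i hi
      rwa [hfd i] at h0
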